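/- The function f restricted to (r₊, ∞) is a bijection onto ℝ; that is, for every real number y there exists a unique x ∈ (r₊, ∞) with f(x) = y. -/

import Mathlib

lemma auxNum (M a c E s x u : ℝ) (hM : 0 < M) (ha : 0 < a) (hs : 0 < s)
    (hE : E < M^2) (hxM : M < x) (hu0 : 0 < u) (hu2 : u^2 = x^2-2*M*x+E) :
    (2*(x^2+c^2) + (2*x-2*M)*(2*x) - (4*(x^2-2*M*x+E) + 4*x*(2*x-2*M))) * (4*a*x*u*s)
      - ((2*x-2*M)*(x^2+c^2) - 4*x*(x^2-2*M*x+E)) * ((4*a*u + 4*a*x*((2*x-2*M)/(2*u)))*s) < 0 := by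
  have hx : 0 < x := lt_trans hM hxM
  have hx2 : (0:ℝ) < x^2 + c^2 := by nlinarith [sq_nonneg c]
  have key : (2*(x^2+c^2) + (2*x-2*M)*(2*x) - (4*(x^2-2*M*x+E) + 4*x*(2*x-2*M))) * (4*a*x*u*s)
      - ((2*x-2*M)*(x^2+c^2) - 4*x*(x^2-2*M*x+E)) * ((4*a*u + 4*a*x*((2*x-2*M)/(2*u)))*s)
      = -8*a*s*(x^2+c^2)*((x-M)^3 + (M^3 - M*E))/u := by
    rw [← hu2]
    field_simp
    linear_combination (8*M*(x^2+c^2)) * hu2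
  rw [key]
  apply div_neg_of_neg_of_pos _ hu0
  have h1 : 0 < (x-M)^3 + (M^3 - M*E) := by nlinarith [pow_pos (sub_pos.mpr hxM) 3]
  nlinarith [mul_pos (mul_pos (mul_pos (by linarith : (0:ℝ) < 8*a) hs) hx2) h1]

lemma auxDeriv (M a c E s x : ℝ) (hM : 0 < M) (ha : 0 < a) (hs : 0 < s)
    (hE : E < M^2) (hxM : M < x) (hΔx : 0 < x^2 - 2*M*x + E) :
    ∃ d, d < 0 ∧ HasDerivAt (fun y : ℝ =>
      ((2*y-2*M)*(y^2+c^2) - 4*y*(y^2-2*M*y+E))/(4*a*y*Real.sqrt (y^2-2*M*y+E)*s)) d x := by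
  have hx : 0 < x := lt_trans hM hxM
  set u := Real.sqrt (x^2-2*M*x+E) with hu
  have hu0 : 0 < u := Real.sqrt_pos.mpr hΔx
  have hu2 : u^2 = x^2-2*M*x+E := Real.sq_sqrt hΔx.le
  have hP : HasDerivAt (fun y : ℝ => y^2 - 2*M*y + E) (2*x - 2*M) x := by
    have h1 : HasDerivAt (fun y : ℝ => y^2) (2*x) x := by simpa using hasDerivAt_pow 2 x
    have h2 : HasDerivAt (fun y : ℝ => 2*M*y) (2*M) x := by
      simpa using (hasDerivAt_id x).const_mul (2*M)
    simpa using (h1.sub h2).add_const E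
  have hsq : HasDerivAt (fun y : ℝ => Real.sqrt (y^2-2*M*y+E)) ((2*x-2*M)/(2*u)) x := by
    simpa [← hu] using hP.sqrt hΔx.ne'
  have hA : HasDerivAt (fun y : ℝ => 2*y-2*M) 2 x := by
    simpa using ((hasDerivAt_id x).const_mul 2).sub_const (2*M)
  have hB : HasDerivAt (fun y : ℝ => y^2+c^2) (2*x) x := by
    simpa using (hasDerivAt_pow 2 x).add_const (c^2)
  have h3 : HasDerivAt (fun y : ℝ => 4*y) 4 x := by simpa using (hasDerivAt_id x).const_mul 4
  have hN : HasDerivAt (fun y : ℝ => (2*y-2*M)*(y^2+c^2) - 4*y*(y^2-2*M*y+E))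
      (2*(x^2+c^2) + (2*x-2*M)*(2*x) - (4*(x^2-2*M*x+E) + 4*x*(2*x-2*M))) x :=
    (hA.mul hB).sub (h3.mul hP)
  have h4 : HasDerivAt (fun y : ℝ => 4*a*y) (4*a) x := by
    simpa using (hasDerivAt_id x).const_mul (4*a)
  have hD : HasDerivAt (fun y : ℝ => 4*a*y*Real.sqrt (y^2-2*M*y+E)*s)
      ((4*a*u + 4*a*x*((2*x-2*M)/(2*u)))*s) x := by
    simpa [← hu] using (h4.mul hsq).mul_const s
  have hDpos : 0 < 4*a*x*u*s :=
    mul_pos (mul_pos (mul_pos (by linarith : (0:ℝ) < 4*a) hx) hu0) hs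
  have hD0 : 4*a*x*Real.sqrt (x^2-2*M*x+E)*s ≠ 0 := by rw [← hu]; exact ne_of_gt hDpos
  have hd : HasDerivAt (fun y : ℝ =>
      ((2*y-2*M)*(y^2+c^2) - 4*y*(y^2-2*M*y+E))/(4*a*y*Real.sqrt (y^2-2*M*y+E)*s))
      (((2*(x^2+c^2) + (2*x-2*M)*(2*x) - (4*(x^2-2*M*x+E) + 4*x*(2*x-2*M))) * (4*a*x*u*s)
        - ((2*x-2*M)*(x^2+c^2) - 4*x*(x^2-2*M*x+E)) * ((4*a*u + 4*a*x*((2*x-2*M)/(2*u)))*s))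
        / (4*a*x*u*s)^2) x := by
    have := hN.div hD hD0
    rw [← hu] at this
    exact this
  refine ⟨_, ?_, hd⟩
  apply div_neg_of_neg_of_pos
  · exact auxNum M a c E s x u hM ha hs hE hxM hu0 hu2
  · exact pow_pos hDpos 2

set_option maxHeartbeats 2000000 in
theorem stmt_4 (M a l Q θ rp : ℝ) (Δ f : ℝ → ℝ)
    (hM : 0 < M) (ha : 0 < a) (hsub : 0 < M^2 - a^2 + l^2 - Q^2)
    (hθ : θ ∈ Set.Ioo 0 Real.pi)
    (hΔ : ∀ x, Δ x = x^2 - 2*M*x + a^2 - l^2 + Q^2)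
    (hrp : rp = M + Real.sqrt (M^2 - a^2 + l^2 - Q^2))
    (hf : ∀ x, f x = ((2*x - 2*M) * (x^2 + (l + a*Real.cos θ)^2) - 4*x*Δ x) /
        (4*a*x*Real.sqrt (Δ x) * Real.sin θ)) :
    ∀ y : ℝ, ∃! x, x ∈ Set.Ioi rp ∧ f x = y := by
  have hs : 0 < Real.sin θ := Real.sin_pos_of_pos_of_lt_pi hθ.1 hθ.2
  set s := Real.sin θ with hs_def
  set c := l + a * Real.cos θ with hc_def
  set E := a^2 - l^2 + Q^2 with hE_def
  obtain ⟨k, hk0, hk2, hrpk⟩ : ∃ k : ℝ, 0 < k ∧ k^2 = M^2 - E ∧ rp = M + k :=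
    ⟨Real.sqrt (M^2 - a^2 + l^2 - Q^2), Real.sqrt_pos.mpr hsub,
      by rw [Real.sq_sqrt hsub.le, hE_def]; ring, hrp⟩
  have hEM : E < M^2 := by rw [hE_def]; nlinarith
  have hΔ' : ∀ x, Δ x = x^2 - 2*M*x + E := by
    intro x; rw [hΔ x, hE_def]; ring
  have hfe : f = fun y => ((2*y-2*M)*(y^2+c^2) - 4*y*(y^2-2*M*y+E))
      / (4*a*y*Real.sqrt (y^2-2*M*y+E)*s) := by
    funext y; rw [hf y, hΔ' y]
  clear_value s c E
  have hMrp : M < rp := by rw [hrpk]; linarith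
  have hrp0 : 0 < rp := hM.trans hMrp
  have hΔpos : ∀ x, rp < x → 0 < x^2 - 2*M*x + E := by
    intro x hx
    have hxk : k < x - M := by rw [hrpk] at hx; linarith
    nlinarith [sq_nonneg (x - M - k), mul_pos hk0 (sub_pos.mpr (lt_trans hk0 hxk))]
  have hfd : ∀ x ∈ Set.Ioi rp, ∃ d, d < 0 ∧ HasDerivAt f d x := by
    intro x hx
    have hxM : M < x := lt_trans hMrp hx
    have h := auxDeriv M a c E s x hM ha hs hEM hxM (hΔpos x hx)
    rw [hfe]; exact h
  have hanti : StrictAntiOn f (Set.Ioi rp) := by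
    apply strictAntiOn_of_deriv_neg (convex_Ioi rp)
    · intro x hx
      obtain ⟨d, _, hd⟩ := hfd x hx
      exact hd.continuousAt.continuousWithinAt
    · intro x hx
      rw [interior_Ioi] at hx
      obtain ⟨d, hd0, hd⟩ := hfd x hx
      rw [hd.deriv]; exact hd0
  -- f takes arbitrarily small values
  have hbig : ∀ y : ℝ, ∃ x, rp < x ∧ f x < y := by
    intro y
    obtain ⟨X, hX⟩ : ∃ t : ℝ, t = rp + 6*M + 4*a*s*|y| + |2*c^2-4*E| + 1 := ⟨_, rfl⟩
    have habs : 0 ≤ |2*c^2-4*E| := abs_nonneg _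
    have haby : 0 ≤ |y| := abs_nonneg y
    have h4as : 0 < 4*a*s := by nlinarith
    have h4asy : 0 ≤ 4*a*s*|y| := mul_nonneg h4as.le haby
    have hXrp : rp < X := by rw [hX]; linarith
    have hX0 : 0 < X := hrp0.trans hXrp
    have hXM : M < X := hMrp.trans hXrp
    have hX1 : (1:ℝ) < X := by rw [hX]; linarith
    have hΔX : 0 < X^2 - 2*M*X + E := hΔpos X hXrp
    refine ⟨X, hXrp, ?_⟩
    rw [hf X, hΔ' X]
    obtain ⟨u, hu⟩ : ∃ t : ℝ, t = Real.sqrt (X^2 - 2*M*X + E) := ⟨_, rfl⟩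
    rw [← hu]
    have hu0 : 0 < u := hu ▸ Real.sqrt_pos.mpr hΔX
    have huX : u ≤ X := by
      have h1 : X^2 - 2*M*X + E ≤ X^2 := by nlinarith
      calc u = Real.sqrt (X^2 - 2*M*X + E) := hu
        _ ≤ Real.sqrt (X^2) := Real.sqrt_le_sqrt h1
        _ = X := Real.sqrt_sq hX0.le
    have hDpos : 0 < 4*a*X*u*s :=
      mul_pos (mul_pos (mul_pos (by linarith : (0:ℝ) < 4*a) hX0) hu0) hs
    rw [div_lt_iff₀ hDpos]
    have hasX : (0:ℝ) ≤ 4*a*s*X := mul_nonneg h4as.le hX0.le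
    have t1 : 0 ≤ (4*a*s*X) * ((y+|y|)*u) :=
      mul_nonneg hasX (mul_nonneg (by linarith [neg_abs_le y]) hu0.le)
    have t2 : 0 ≤ (4*a*s*X) * (|y| *(X-u)) :=
      mul_nonneg hasX (mul_nonneg haby (by linarith))
    have h2 : -(4*a*s*|y| *X^2) ≤ y * (4*a*X*u*s) := by linarith [t1, t2]
    have hB1 : 6*M + 4*a*s*|y| ≤ X - 1 := by rw [hX]; linarith
    have hB2 : 2*c^2 - 4*E ≤ X - 1 := by
      have := le_abs_self (2*c^2-4*E); rw [hX]; linarith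
    have hp1 : (6*M + 4*a*s*|y|) * X^2 ≤ (X-1) * X^2 :=
      mul_le_mul_of_nonneg_right hB1 (sq_nonneg X)
    have hp2 : (2*c^2 - 4*E) * X ≤ (X-1) * X :=
      mul_le_mul_of_nonneg_right hB2 hX0.le
    have hp3 : 0 < X^3 := pow_pos hX0 3
    have hp4 : 0 ≤ M * c^2 := mul_nonneg hM.le (sq_nonneg c)
    have h3 : (2*X-2*M)*(X^2+c^2) - 4*X*(X^2-2*M*X+E) < -(4*a*s*|y| *X^2) := by
      linarith [hp1, hp2, hp3, hp4]
    linarith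
  -- f takes arbitrarily large values
  have hsmall : ∀ y : ℝ, ∃ x, rp < x ∧ y < f x := by
    intro y
    have haby : 0 ≤ |y| := abs_nonneg y
    have h4as : 0 < 4*a*s := by nlinarith
    have hden : 0 < 4*a*s*(rp+1)*(|y|+1) :=
      mul_pos (mul_pos h4as (by linarith)) (by linarith)
    obtain ⟨ε, hε⟩ : ∃ t : ℝ, t = min 1 ((k*rp^2)/(4*a*s*(rp+1)*(|y|+1))) := ⟨_, rfl⟩
    have hε0 : 0 < ε := hε ▸ lt_min one_pos (div_pos (mul_pos hk0 (pow_pos hrp0 2)) hden)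
    have hεb : ε * (4*a*s*(rp+1)*(|y|+1)) ≤ k*rp^2 :=
      (le_div_iff₀ hden).mp (hε ▸ min_le_right _ _)
    have h12k : (0:ℝ) < 1 + 2*k := by linarith
    obtain ⟨δ, hδ⟩ : ∃ t : ℝ, t = min 1 (min (ε^2/(1+2*k)) ((k*rp^2)/(4*(rp+1)*(1+2*k)))) / 2 := ⟨_, rfl⟩
    have h4rpk : (0:ℝ) < 4*(rp+1)*(1+2*k) :=
      mul_pos (mul_pos (by norm_num) (by linarith)) h12k
    have hδ0 : 0 < δ := by
      rw [hδ]
      apply div_pos _ (by norm_num : (0:ℝ) < 2)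
      exact lt_min one_pos (lt_min (div_pos (pow_pos hε0 2) h12k)
        (div_pos (mul_pos hk0 (pow_pos hrp0 2)) h4rpk))
    have hδ1 : δ ≤ 1 := by
      have h1 := min_le_left 1 (min (ε^2/(1+2*k)) ((k*rp^2)/(4*(rp+1)*(1+2*k))))
      have h2 : (0:ℝ) < min 1 (min (ε^2/(1+2*k)) ((k*rp^2)/(4*(rp+1)*(1+2*k)))) :=
        lt_min one_pos (lt_min (div_pos (pow_pos hε0 2) h12k)
          (div_pos (mul_pos hk0 (pow_pos hrp0 2)) h4rpk))
      rw [hδ]; linarith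
    have hδ2 : δ*(1+2*k) ≤ ε^2 := by
      have hA : δ ≤ ε^2/(1+2*k) := by
        have h1 := min_le_left (ε^2/(1+2*k)) ((k*rp^2)/(4*(rp+1)*(1+2*k)))
        have h2 := min_le_right 1 (min (ε^2/(1+2*k)) ((k*rp^2)/(4*(rp+1)*(1+2*k))))
        have h3 : 0 < ε^2/(1+2*k) := div_pos (pow_pos hε0 2) h12k
        rw [hδ]; linarith
      calc δ*(1+2*k) ≤ (ε^2/(1+2*k))*(1+2*k) :=
            mul_le_mul_of_nonneg_right hA h12k.le
        _ = ε^2 := by field_simp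
    have hδ3 : 4*(rp+1)*(δ*(1+2*k)) ≤ k*rp^2 := by
      have hA : δ ≤ (k*rp^2)/(4*(rp+1)*(1+2*k)) := by
        have h1 := min_le_right (ε^2/(1+2*k)) ((k*rp^2)/(4*(rp+1)*(1+2*k)))
        have h2 := min_le_right 1 (min (ε^2/(1+2*k)) ((k*rp^2)/(4*(rp+1)*(1+2*k))))
        have h3 : 0 < (k*rp^2)/(4*(rp+1)*(1+2*k)) :=
          div_pos (mul_pos hk0 (pow_pos hrp0 2)) h4rpk
        rw [hδ]; linarith
      have h4 := (le_div_iff₀ h4rpk).mp hA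
      linarith
    obtain ⟨x, hxd⟩ : ∃ t : ℝ, t = rp + δ := ⟨_, rfl⟩
    have hxrp : rp < x := by rw [hxd]; linarith
    have hx0 : 0 < x := hrp0.trans hxrp
    have hxMk : x = M + k + δ := by rw [hxd, hrpk]
    have hΔval : x^2 - 2*M*x + E = δ*(δ+2*k) := by
      rw [hxMk]; linear_combination hk2
    have hΔx : 0 < x^2 - 2*M*x + E := by
      rw [hΔval]; exact mul_pos hδ0 (by linarith)
    refine ⟨x, hxrp, ?_⟩
    rw [hf x, hΔ' x]
    obtain ⟨u, hu⟩ : ∃ t : ℝ, t = Real.sqrt (x^2 - 2*M*x + E) := ⟨_, rfl⟩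
    rw [← hu]
    have hu0 : 0 < u := hu ▸ Real.sqrt_pos.mpr hΔx
    have huε : u ≤ ε := by
      have h1 : x^2 - 2*M*x + E ≤ ε^2 := by
        rw [hΔval]; linarith [mul_le_mul_of_nonneg_left hδ1 hδ0.le, hδ2]
      calc u = Real.sqrt (x^2 - 2*M*x + E) := hu
        _ ≤ Real.sqrt (ε^2) := Real.sqrt_le_sqrt h1
        _ = ε := Real.sqrt_sq hε0.le
    have hDpos : 0 < 4*a*x*u*s :=
      mul_pos (mul_pos (mul_pos (by linarith : (0:ℝ) < 4*a) hx0) hu0) hs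
    rw [lt_div_iff₀ hDpos]
    have hx1 : x ≤ rp + 1 := by rw [hxd]; linarith
    have hN : k*rp^2 ≤ (2*x-2*M)*(x^2+c^2) - 4*x*(x^2-2*M*x+E) := by
      have e1 : 4*x*(x^2-2*M*x+E) ≤ k*rp^2 := by
        rw [hΔval]
        have hδδ : δ*(δ+2*k) ≤ δ*(1+2*k) :=
          mul_le_mul_of_nonneg_left (by linarith) hδ0.le
        have hδδ0 : 0 ≤ δ*(δ+2*k) :=
          mul_nonneg hδ0.le (by linarith)
        have hprod : x*(δ*(δ+2*k)) ≤ (rp+1)*(δ*(1+2*k)) :=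
          mul_le_mul hx1 hδδ hδδ0 (by linarith)
        linarith [hprod, hδ3]
      have e2 : 2*k*rp^2 ≤ (2*x-2*M)*(x^2+c^2) := by
        have hxm : k ≤ x - M := by rw [hxMk]; linarith
        have hxx : rp^2 ≤ x^2 := pow_le_pow_left₀ hrp0.le hxrp.le 2
        have hprod : (2*k)*(rp^2) ≤ (2*x-2*M)*(x^2+c^2) :=
          mul_le_mul (by linarith) (by linarith [sq_nonneg c])
            (sq_nonneg rp) (by linarith)
        linarith [hprod]
      linarith
    have hDb : (4*a*x*u*s)*(|y|+1) ≤ k*rp^2 := by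
      have hux : u*x ≤ ε*(rp+1) := mul_le_mul huε hx1 hx0.le hε0.le
      have t4 : 0 ≤ (4*a*s*(|y|+1)) * (ε*(rp+1) - u*x) :=
        mul_nonneg (mul_nonneg h4as.le (by linarith)) (by linarith)
      linarith [hεb, t4]
    have hy : y * (4*a*x*u*s) ≤ |y| * (4*a*x*u*s) :=
      mul_le_mul_of_nonneg_right (le_abs_self y) hDpos.le
    linarith [hDb, hN, hDpos, hy]
  intro y
  obtain ⟨x₁, hx₁, hfx₁⟩ := hsmall y
  obtain ⟨x₂, hx₂, hfx₂⟩ := hbig y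
  have h12 : x₁ < x₂ := by
    rcases lt_trichotomy x₁ x₂ with h | h | h
    · exact h
    · rw [h] at hfx₁; linarith
    · have := hanti hx₂ hx₁ h; linarith
  have cont : ContinuousOn f (Set.Icc x₁ x₂) := by
    intro z hz
    obtain ⟨d, _, hd⟩ := hfd z (lt_of_lt_of_le hx₁ hz.1)
    exact hd.continuousAt.continuousWithinAt
  obtain ⟨x, hxmem, hfx⟩ := intermediate_value_Icc' h12.le cont ⟨hfx₂.le, hfx₁.le⟩
  have hxIoi : x ∈ Set.Ioi rp := lt_of_lt_of_le hx₁ hxmem.1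
  refine ⟨x, ⟨hxIoi, hfx⟩, ?_⟩
  rintro x' ⟨hx', hfx'⟩
  exact hanti.injOn hx' hxIoi (by rw [hfx', hfx])
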